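/- If γ = ∫_Ω g dμ ≠ 1, then the equation φ(x) = ∫_Ω g(ω) φ(f(x,ω)) μ(dω) + F(x) has exactly one Lipschitzian solution φ : X → Y, given by φ(x) = (1−γ)^{−1}(∑_{n=1}^∞ (F_n(x) − γ F_{n−1}(x)) + F(x)). -/

import Mathlib

open MeasureTheory

/-- Main theorem: if γ = ∫ g dμ ≠ 1, the equation φ(x) = ∫ g(ω) • φ(f(x,ω)) dμ + F(x)
has exactly one Lipschitzian solution, given by
φ(x) = (1−γ)⁻¹ • (∑ₙ (F_{n+1}(x) − γ Fₙ(x)) + F(x)). -/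
theorem stmt_7 {Ω : Type*} [MeasurableSpace Ω] (μ : MeasureTheory.Measure Ω)
    {X : Type*} [MetricSpace X] [TopologicalSpace.SeparableSpace X]
    [MeasurableSpace X] [BorelSpace X]
    {𝕂 : Type*} [RCLike 𝕂]
    {Y : Type*} [NormedAddCommGroup Y] [NormedSpace 𝕂 Y] [NormedSpace ℝ Y] [CompleteSpace Y]
    (f : X → Ω → X) (g : Ω → 𝕂) (F : X → Y) (L : NNReal)
    (hf : ∀ x, Measurable (f x))
    (hg : Integrable g μ)
    (hint : ∀ x, Integrable (fun ω => ‖g ω‖ * dist (f x ω) x) μ)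
    (lam : ℝ) (hlam : lam ∈ Set.Ico (0 : ℝ) 1)
    (hcontr : ∀ x z : X, (∫ ω, ‖g ω‖ * dist (f x ω) (f z ω) ∂μ) ≤ lam * dist x z)
    (hF : LipschitzWith L F)
    (γ : 𝕂) (hγ : γ = ∫ ω, g ω ∂μ) (hγ1 : γ ≠ 1)
    (Fseq : ℕ → X → Y)
    (hF0 : Fseq 0 = F)
    (hFn : ∀ n x, Fseq (n + 1) x = ∫ ω, g ω • Fseq n (f x ω) ∂μ)
    (hmeas : ∀ n x, AEStronglyMeasurable (fun ω => g ω • Fseq n (f x ω)) μ)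
    (φ : X → Y)
    (hφdef : ∀ x, φ x = (1 - γ)⁻¹ •
      ((∑' n : ℕ, (Fseq (n + 1) x - γ • Fseq n x)) + F x)) :
    (∃ K : NNReal, LipschitzWith K φ) ∧
    (∀ x, Integrable (fun ω => g ω • φ (f x ω)) μ ∧
      φ x = (∫ ω, g ω • φ (f x ω) ∂μ) + F x) ∧
    (∀ ψ : X → Y, (∃ K : NNReal, LipschitzWith K ψ) →
      (∀ x, Integrable (fun ω => g ω • ψ (f x ω)) μ ∧
        ψ x = (∫ ω, g ω • ψ (f x ω) ∂μ) + F x) →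
      ψ = φ) := by
  haveI : SecondCountableTopology X := UniformSpace.secondCountable_of_separable X
  obtain ⟨hlam0, hlam1⟩ := hlam
  have hgn : Integrable (fun ω => ‖g ω‖) μ := hg.norm
  set G : ℝ := ∫ ω, ‖g ω‖ ∂μ with hGdef
  set a : X → ℝ := fun x => ∫ ω, ‖g ω‖ * dist (f x ω) x ∂μ with hadef
  have ha0 : ∀ x, 0 ≤ a x := fun x =>
    integral_nonneg fun ω => mul_nonneg (norm_nonneg _) dist_nonneg
  have h1γ : (1 : 𝕂) - γ ≠ 0 := sub_ne_zero.mpr (Ne.symm hγ1)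
  -- integrability of ω ↦ ‖g ω‖ * dist (f p ω) (f q ω)
  have hdint : ∀ p q : X, Integrable (fun ω => ‖g ω‖ * dist (f p ω) (f q ω)) μ := by
    intro p q
    have hm : AEStronglyMeasurable (fun ω => ‖g ω‖ * dist (f p ω) (f q ω)) μ :=
      hg.norm.aestronglyMeasurable.mul ((hf p).dist (hf q)).aestronglyMeasurable
    refine Integrable.mono' (((hint p).add (hgn.mul_const (dist p q))).add (hint q)) hm
      (Filter.Eventually.of_forall fun ω => ?_)
    have h1 : dist (f p ω) (f q ω) ≤ dist (f p ω) p + dist p q + dist (f q ω) q := by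
      have := dist_triangle4 (f p ω) p q (f q ω)
      simpa [dist_comm] using this
    have hg0 : (0:ℝ) ≤ ‖g ω‖ := norm_nonneg _
    rw [Real.norm_of_nonneg (mul_nonneg hg0 dist_nonneg)]
    calc ‖g ω‖ * dist (f p ω) (f q ω)
        ≤ ‖g ω‖ * (dist (f p ω) p + dist p q + dist (f q ω) q) :=
          mul_le_mul_of_nonneg_left h1 hg0
      _ = ‖g ω‖ * dist (f p ω) p + ‖g ω‖ * dist p q + ‖g ω‖ * dist (f q ω) q := by
          ring
  -- measurability helper
  have hsm : ∀ (u : X → Y), Continuous u → ∀ x,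
      AEStronglyMeasurable (fun ω => g ω • u (f x ω)) μ := fun u hu x =>
    hg.aestronglyMeasurable.smul
      ((hu.comp_stronglyMeasurable (hf x).stronglyMeasurable).aestronglyMeasurable)
  -- integrability helper
  have hintu : ∀ (u : X → Y) (C : ℝ) (x : X),
      (∀ p q, ‖u p - u q‖ ≤ C * dist p q) →
      AEStronglyMeasurable (fun ω => g ω • u (f x ω)) μ →
      Integrable (fun ω => g ω • u (f x ω)) μ := by
    intro u C x hL hm
    refine Integrable.mono' ((hgn.mul_const ‖u x‖).add ((hint x).const_mul C)) hm
      (Filter.Eventually.of_forall fun ω => ?_)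
    have h2 : ‖u (f x ω)‖ - ‖u x‖ ≤ ‖u (f x ω) - u x‖ := norm_sub_norm_le _ _
    have h1 : ‖u (f x ω)‖ ≤ ‖u x‖ + C * dist (f x ω) x := by
      have := hL (f x ω) x; linarith
    have hg0 : (0:ℝ) ≤ ‖g ω‖ := norm_nonneg _
    rw [norm_smul]
    calc ‖g ω‖ * ‖u (f x ω)‖ ≤ ‖g ω‖ * (‖u x‖ + C * dist (f x ω) x) :=
          mul_le_mul_of_nonneg_left h1 hg0
      _ = ‖g ω‖ * ‖u x‖ + C * (‖g ω‖ * dist (f x ω) x) := by ring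
  -- Lipschitz constant converter
  have mkLip : ∀ (u : X → Y) (C : ℝ), (∀ p q, ‖u p - u q‖ ≤ C * dist p q) →
      LipschitzWith (Real.toNNReal C) u := fun u C h =>
    LipschitzWith.of_dist_le_mul fun p q => by
      rw [dist_eq_norm]
      exact (h p q).trans (mul_le_mul_of_nonneg_right (Real.le_coe_toNNReal _) dist_nonneg)
  -- Lipschitz estimate for Fseq n
  have key : ∀ n, ∀ p q : X, ‖Fseq n p - Fseq n q‖ ≤ (L:ℝ) * lam ^ n * dist p q := by
    intro n
    induction n with
    | zero =>
      intro p q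
      rw [hF0, ← dist_eq_norm]
      simpa using hF.dist_le_mul p q
    | succ n ih =>
      have hIn : ∀ x, Integrable (fun ω => g ω • Fseq n (f x ω)) μ := fun x =>
        hintu (Fseq n) _ x ih (hmeas n x)
      intro p q
      rw [hFn n p, hFn n q, ← integral_sub (hIn p) (hIn q)]
      calc ‖∫ ω, (g ω • Fseq n (f p ω) - g ω • Fseq n (f q ω)) ∂μ‖
          ≤ ∫ ω, ‖g ω • Fseq n (f p ω) - g ω • Fseq n (f q ω)‖ ∂μ :=
            norm_integral_le_integral_norm _
        _ ≤ ∫ ω, (L:ℝ) * lam ^ n * (‖g ω‖ * dist (f p ω) (f q ω)) ∂μ := by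
            refine integral_mono ((hIn p).sub (hIn q)).norm ((hdint p q).const_mul _)
              fun ω => ?_
            rw [← smul_sub, norm_smul]
            calc ‖g ω‖ * ‖Fseq n (f p ω) - Fseq n (f q ω)‖
                ≤ ‖g ω‖ * ((L:ℝ) * lam ^ n * dist (f p ω) (f q ω)) :=
                  mul_le_mul_of_nonneg_left (ih _ _) (norm_nonneg _)
              _ = (L:ℝ) * lam ^ n * (‖g ω‖ * dist (f p ω) (f q ω)) := by ring
        _ = (L:ℝ) * lam ^ n * ∫ ω, ‖g ω‖ * dist (f p ω) (f q ω) ∂μ :=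
            integral_const_mul _ _
        _ ≤ (L:ℝ) * lam ^ n * (lam * dist p q) :=
            mul_le_mul_of_nonneg_left (hcontr p q)
              (mul_nonneg L.coe_nonneg (pow_nonneg hlam0 n))
        _ = (L:ℝ) * lam ^ (n+1) * dist p q := by ring
  have hFint : ∀ n x, Integrable (fun ω => g ω • Fseq n (f x ω)) μ :=
    fun n x => hintu _ _ x (key n) (hmeas n x)
  -- representation of the terms
  have hrep : ∀ n (x : X), Fseq (n+1) x - γ • Fseq n x
      = ∫ ω, g ω • (Fseq n (f x ω) - Fseq n x) ∂μ := by
    intro n x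
    have h2 : Integrable (fun ω => g ω • Fseq n x) μ := hg.smul_const (Fseq n x)
    rw [show (fun ω => g ω • (Fseq n (f x ω) - Fseq n x))
        = fun ω => g ω • Fseq n (f x ω) - g ω • Fseq n x from
        funext fun ω => smul_sub _ _ _]
    rw [integral_sub (hFint n x) h2, integral_smul_const, ← hγ, ← hFn n x]
  -- bound for the terms
  have htb : ∀ n (x : X), ‖Fseq (n+1) x - γ • Fseq n x‖ ≤ (L:ℝ) * lam ^ n * a x := by
    intro n x
    rw [hrep n x]
    have h2 : Integrable (fun ω => g ω • Fseq n x) μ := hg.smul_const (Fseq n x)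
    have h1 : Integrable (fun ω => g ω • (Fseq n (f x ω) - Fseq n x)) μ := by
      refine ((hFint n x).sub h2).congr (Filter.Eventually.of_forall fun ω => ?_)
      show g ω • Fseq n (f x ω) - g ω • Fseq n x
          = g ω • (Fseq n (f x ω) - Fseq n x)
      rw [smul_sub]
    calc ‖∫ ω, g ω • (Fseq n (f x ω) - Fseq n x) ∂μ‖
        ≤ ∫ ω, ‖g ω • (Fseq n (f x ω) - Fseq n x)‖ ∂μ := norm_integral_le_integral_norm _
      _ ≤ ∫ ω, (L:ℝ) * lam ^ n * (‖g ω‖ * dist (f x ω) x) ∂μ := by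
          refine integral_mono h1.norm ((hint x).const_mul _) fun ω => ?_
          rw [norm_smul]
          calc ‖g ω‖ * ‖Fseq n (f x ω) - Fseq n x‖
              ≤ ‖g ω‖ * ((L:ℝ) * lam ^ n * dist (f x ω) x) :=
                mul_le_mul_of_nonneg_left (key n _ _) (norm_nonneg _)
            _ = (L:ℝ) * lam ^ n * (‖g ω‖ * dist (f x ω) x) := by ring
      _ = (L:ℝ) * lam ^ n * a x := integral_const_mul _ _
  -- Lipschitz estimate for the terms
  have htl : ∀ n (p q : X), ‖(Fseq (n+1) p - γ • Fseq n p) - (Fseq (n+1) q - γ • Fseq n q)‖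
      ≤ (L:ℝ) * lam ^ n * (lam + ‖γ‖) * dist p q := by
    intro n p q
    have habel : (Fseq (n+1) p - γ • Fseq n p) - (Fseq (n+1) q - γ • Fseq n q)
        = (Fseq (n+1) p - Fseq (n+1) q) - γ • (Fseq n p - Fseq n q) := by
      rw [smul_sub]; abel
    rw [habel]
    calc ‖(Fseq (n+1) p - Fseq (n+1) q) - γ • (Fseq n p - Fseq n q)‖
        ≤ ‖Fseq (n+1) p - Fseq (n+1) q‖ + ‖γ • (Fseq n p - Fseq n q)‖ := norm_sub_le _ _
      _ = ‖Fseq (n+1) p - Fseq (n+1) q‖ + ‖γ‖ * ‖Fseq n p - Fseq n q‖ := by rw [norm_smul]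
      _ ≤ (L:ℝ) * lam ^ (n+1) * dist p q + ‖γ‖ * ((L:ℝ) * lam ^ n * dist p q) :=
          add_le_add (key (n+1) p q)
            (mul_le_mul_of_nonneg_left (key n p q) (norm_nonneg _))
      _ = (L:ℝ) * lam ^ n * (lam + ‖γ‖) * dist p q := by ring
  have hgeo : Summable fun n : ℕ => lam ^ n := summable_geometric_of_lt_one hlam0 hlam1
  have hbs : ∀ b : ℝ, Summable fun n : ℕ => (L:ℝ) * lam ^ n * b := fun b =>
    (hgeo.mul_left (L:ℝ)).mul_right b
  have hSummand : ∀ x : X, Summable fun n => Fseq (n+1) x - γ • Fseq n x := fun x =>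
    Summable.of_norm_bounded (hbs (a x)) (fun n => htb n x)
  set S : X → Y := fun x => ∑' n, (Fseq (n+1) x - γ • Fseq n x) with hSdef
  have hφS : ∀ x, φ x = (1 - γ)⁻¹ • (S x + F x) := fun x => hφdef x
  set CS : ℝ := (L:ℝ) * (lam + ‖γ‖) * (1 - lam)⁻¹ with hCSdef
  have hCS0 : 0 ≤ CS :=
    mul_nonneg (mul_nonneg L.coe_nonneg (add_nonneg hlam0 (norm_nonneg _)))
      (inv_nonneg.mpr (by linarith))
  have hSlip : ∀ p q : X, ‖S p - S q‖ ≤ CS * dist p q := by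
    intro p q
    have h1 : S p - S q
        = ∑' n, ((Fseq (n+1) p - γ • Fseq n p) - (Fseq (n+1) q - γ • Fseq n q)) :=
      (Summable.tsum_sub (hSummand p) (hSummand q)).symm
    rw [h1]
    have hb : Summable fun n : ℕ => (L:ℝ) * lam ^ n * ((lam + ‖γ‖) * dist p q) :=
      hbs _
    have hb' : Summable fun n : ℕ => (L:ℝ) * lam ^ n * (lam + ‖γ‖) * dist p q :=
      hb.congr fun n => by ring
    have hnorm : Summable fun n =>
        ‖(Fseq (n+1) p - γ • Fseq n p) - (Fseq (n+1) q - γ • Fseq n q)‖ :=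
      Summable.of_nonneg_of_le (fun n => norm_nonneg _) (fun n => htl n p q) hb'
    calc ‖∑' n, ((Fseq (n+1) p - γ • Fseq n p) - (Fseq (n+1) q - γ • Fseq n q))‖
        ≤ ∑' n, ‖(Fseq (n+1) p - γ • Fseq n p) - (Fseq (n+1) q - γ • Fseq n q)‖ :=
          norm_tsum_le_tsum_norm hnorm
      _ ≤ ∑' n : ℕ, (L:ℝ) * lam ^ n * (lam + ‖γ‖) * dist p q :=
          Summable.tsum_le_tsum (fun n => htl n p q) hnorm hb'
      _ = ∑' n : ℕ, ((L:ℝ) * (lam + ‖γ‖) * dist p q) * lam ^ n :=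
          tsum_congr fun n => by ring
      _ = ((L:ℝ) * (lam + ‖γ‖) * dist p q) * (1 - lam)⁻¹ := by
          rw [tsum_mul_left, tsum_geometric_of_lt_one hlam0 hlam1]
      _ = CS * dist p q := by rw [hCSdef]; ring
  have hScont : Continuous S := (mkLip S CS hSlip).continuous
  have hFlipR : ∀ p q : X, ‖F p - F q‖ ≤ (L:ℝ) * dist p q := fun p q => by
    rw [← dist_eq_norm]; exact hF.dist_le_mul p q
  set Kφ : ℝ := ‖(1-γ)⁻¹‖ * (CS + L) with hKφdef
  have hKφ0 : 0 ≤ Kφ := mul_nonneg (norm_nonneg _) (add_nonneg hCS0 L.coe_nonneg)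
  have hφlip : ∀ p q : X, ‖φ p - φ q‖ ≤ Kφ * dist p q := by
    intro p q
    rw [hφS p, hφS q, ← smul_sub, norm_smul]
    have habel : (S p + F p) - (S q + F q) = (S p - S q) + (F p - F q) := by abel
    calc ‖(1-γ)⁻¹‖ * ‖(S p + F p) - (S q + F q)‖
        ≤ ‖(1-γ)⁻¹‖ * (CS * dist p q + (L:ℝ) * dist p q) := by
          refine mul_le_mul_of_nonneg_left ?_ (norm_nonneg _)
          rw [habel]
          exact (norm_add_le _ _).trans (add_le_add (hSlip p q) (hFlipR p q))
      _ = Kφ * dist p q := by rw [hKφdef]; ring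
  have hφcont : Continuous φ := (mkLip φ Kφ hφlip).continuous
  have hφint : ∀ x, Integrable (fun ω => g ω • φ (f x ω)) μ :=
    fun x => hintu φ Kφ x hφlip (hsm φ hφcont x)
  -- a is Lipschitz
  have haLip1 : ∀ p q : X, a p ≤ a q + (lam + G) * dist p q := by
    intro p q
    have hB : Integrable (fun ω => ‖g ω‖ * dist p q) μ := hgn.mul_const _
    have hQB : Integrable (fun ω => ‖g ω‖ * dist (f q ω) q + ‖g ω‖ * dist p q) μ :=
      (hint q).add hB
    have hmono : a p ≤ ∫ ω, (‖g ω‖ * dist (f p ω) (f q ω)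
        + (‖g ω‖ * dist (f q ω) q + ‖g ω‖ * dist p q)) ∂μ := by
      refine integral_mono (hint p) ((hdint p q).add hQB) fun ω => ?_
      have h1 : dist (f p ω) p ≤ dist (f p ω) (f q ω) + dist (f q ω) q + dist q p :=
        dist_triangle4 _ _ _ _
      rw [dist_comm q p] at h1
      have hg0 : (0:ℝ) ≤ ‖g ω‖ := norm_nonneg _
      calc ‖g ω‖ * dist (f p ω) p
          ≤ ‖g ω‖ * (dist (f p ω) (f q ω) + dist (f q ω) q + dist p q) :=
            mul_le_mul_of_nonneg_left h1 hg0
        _ = ‖g ω‖ * dist (f p ω) (f q ω)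
            + (‖g ω‖ * dist (f q ω) q + ‖g ω‖ * dist p q) := by ring
    rw [integral_add (hdint p q) hQB, integral_add (hint q) hB,
      integral_mul_const, ← hGdef] at hmono
    have h3 := hcontr p q
    have haq : (∫ ω, ‖g ω‖ * dist (f q ω) q ∂μ) = a q := rfl
    rw [haq] at hmono
    linarith
  have haLip : ∀ p q : X, |a p - a q| ≤ (lam + G) * dist p q := by
    intro p q
    rw [abs_sub_le_iff]
    constructor
    · have := haLip1 p q; linarith
    · have := haLip1 q p; rw [dist_comm q p] at this; linarith
  have haCont : Continuous a := by
    refine (LipschitzWith.of_dist_le_mul (K := (lam+G).toNNReal) fun p q => ?_).continuous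
    rw [Real.dist_eq]
    exact (haLip p q).trans (mul_le_mul_of_nonneg_right (Real.le_coe_toNNReal _) dist_nonneg)
  have hax : ∀ x : X, Integrable (fun ω => ‖g ω‖ * a (f x ω)) μ := by
    intro x
    have hm : AEStronglyMeasurable (fun ω => ‖g ω‖ * a (f x ω)) μ :=
      hg.norm.aestronglyMeasurable.mul
        ((haCont.comp_stronglyMeasurable (hf x).stronglyMeasurable).aestronglyMeasurable)
    refine Integrable.mono' ((hgn.mul_const (a x)).add ((hint x).const_mul (lam+G))) hm
      (Filter.Eventually.of_forall fun ω => ?_)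
    have h1 : a (f x ω) ≤ a x + (lam+G) * dist (f x ω) x := haLip1 (f x ω) x
    have hg0 : (0:ℝ) ≤ ‖g ω‖ := norm_nonneg _
    rw [Real.norm_of_nonneg (mul_nonneg hg0 (ha0 _))]
    calc ‖g ω‖ * a (f x ω) ≤ ‖g ω‖ * (a x + (lam+G) * dist (f x ω) x) :=
          mul_le_mul_of_nonneg_left h1 hg0
      _ = ‖g ω‖ * a x + (lam+G) * (‖g ω‖ * dist (f x ω) x) := by ring
  -- integrability of the term integrands
  have hterm_int : ∀ n (x : X),
      Integrable (fun ω => g ω • (Fseq (n+1) (f x ω) - γ • Fseq n (f x ω))) μ := by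
    intro n x
    have h2 : Integrable (fun ω => γ • (g ω • Fseq n (f x ω))) μ :=
      (hFint n x).smul γ
    refine ((hFint (n+1) x).sub h2).congr (Filter.Eventually.of_forall fun ω => ?_)
    show g ω • Fseq (n+1) (f x ω) - γ • (g ω • Fseq n (f x ω))
        = g ω • (Fseq (n+1) (f x ω) - γ • Fseq n (f x ω))
    rw [smul_sub, smul_comm]
  -- the functional equation for φ
  have hmain : ∀ x, φ x = (∫ ω, g ω • φ (f x ω) ∂μ) + F x := by
    intro x
    have hSfx : ∀ ω, g ω • S (f x ω)
        = ∑' n, g ω • (Fseq (n+1) (f x ω) - γ • Fseq n (f x ω)) :=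
      fun ω => ((hSummand (f x ω)).hasSum.const_smul (g ω)).tsum_eq.symm
    have hnormint : ∀ n : ℕ, ∫ ω, ‖g ω • (Fseq (n+1) (f x ω) - γ • Fseq n (f x ω))‖ ∂μ
        ≤ (L:ℝ) * lam ^ n * ∫ ω, ‖g ω‖ * a (f x ω) ∂μ := by
      intro n
      calc ∫ ω, ‖g ω • (Fseq (n+1) (f x ω) - γ • Fseq n (f x ω))‖ ∂μ
          ≤ ∫ ω, (L:ℝ) * lam ^ n * (‖g ω‖ * a (f x ω)) ∂μ := by
            refine integral_mono (hterm_int n x).norm ((hax x).const_mul _) fun ω => ?_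
            rw [norm_smul]
            calc ‖g ω‖ * ‖Fseq (n+1) (f x ω) - γ • Fseq n (f x ω)‖
                ≤ ‖g ω‖ * ((L:ℝ) * lam ^ n * a (f x ω)) :=
                  mul_le_mul_of_nonneg_left (htb n (f x ω)) (norm_nonneg _)
              _ = (L:ℝ) * lam ^ n * (‖g ω‖ * a (f x ω)) := by ring
        _ = (L:ℝ) * lam ^ n * ∫ ω, ‖g ω‖ * a (f x ω) ∂μ := integral_const_mul _ _
    have hsumnorm : Summable fun n =>
        ∫ ω, ‖g ω • (Fseq (n+1) (f x ω) - γ • Fseq n (f x ω))‖ ∂μ :=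
      Summable.of_nonneg_of_le (fun n => integral_nonneg fun ω => norm_nonneg _)
        hnormint (hbs _)
    have hHS : HasSum (fun n => ∫ ω, g ω • (Fseq (n+1) (f x ω) - γ • Fseq n (f x ω)) ∂μ)
        (∫ ω, ∑' n, g ω • (Fseq (n+1) (f x ω) - γ • Fseq n (f x ω)) ∂μ) :=
      hasSum_integral_of_summable_integral_norm (fun n => hterm_int n x) hsumnorm
    have hterm_val : ∀ n : ℕ, ∫ ω, g ω • (Fseq (n+1) (f x ω) - γ • Fseq n (f x ω)) ∂μ
        = Fseq (n+1+1) x - γ • Fseq (n+1) x := by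
      intro n
      have heq : (fun ω => g ω • (Fseq (n+1) (f x ω) - γ • Fseq n (f x ω)))
          = fun ω => g ω • Fseq (n+1) (f x ω) - γ • (g ω • Fseq n (f x ω)) := by
        funext ω; rw [smul_sub, smul_comm]
      have h2 : Integrable (fun ω => γ • (g ω • Fseq n (f x ω))) μ :=
        (hFint n x).smul γ
      rw [heq, integral_sub (hFint (n+1) x) h2,
        integral_smul, ← hFn (n+1) x, ← hFn n x]
    have hSint : ∫ ω, g ω • S (f x ω) ∂μ
        = ∑' n, (Fseq (n+1+1) x - γ • Fseq (n+1) x) := by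
      rw [show (fun ω => g ω • S (f x ω))
          = fun ω => ∑' n, g ω • (Fseq (n+1) (f x ω) - γ • Fseq n (f x ω)) from
          funext hSfx]
      rw [← hHS.tsum_eq]
      exact tsum_congr hterm_val
    have hshift : ∑' n, (Fseq (n+1+1) x - γ • Fseq (n+1) x)
        = S x - (Fseq 1 x - γ • Fseq 0 x) := by
      have h0 : S x = (Fseq 1 x - γ • Fseq 0 x)
          + ∑' n, (Fseq (n+1+1) x - γ • Fseq (n+1) x) :=
        Summable.tsum_eq_zero_add (hSummand x)
      rw [h0]; abel
    have hFpart : ∫ ω, g ω • F (f x ω) ∂μ = Fseq 1 x := by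
      rw [← hF0]; exact (hFn 0 x).symm
    have hintS : Integrable (fun ω => g ω • S (f x ω)) μ :=
      hintu S CS x hSlip (hsm S hScont x)
    have hintF : Integrable (fun ω => g ω • F (f x ω)) μ := by
      rw [← hF0]; exact hFint 0 x
    have hφfx : (fun ω => g ω • φ (f x ω))
        = fun ω => (1-γ)⁻¹ • (g ω • S (f x ω) + g ω • F (f x ω)) := by
      funext ω
      rw [hφS (f x ω), smul_comm (g ω) ((1-γ)⁻¹), smul_add]
    have hInt : ∫ ω, g ω • φ (f x ω) ∂μ
        = (1-γ)⁻¹ • ((S x - (Fseq 1 x - γ • Fseq 0 x)) + Fseq 1 x) := by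
      rw [hφfx, integral_smul, integral_add hintS hintF, hSint, hshift, hFpart]
    rw [hφS x, hInt, hF0]
    have hdecomp : S x + F x = ((S x - (Fseq 1 x - γ • F x)) + Fseq 1 x) + (1-γ) • F x := by
      rw [sub_smul, one_smul]; abel
    rw [hdecomp, smul_add, inv_smul_smul₀ h1γ]
  refine ⟨⟨Real.toNNReal Kφ, mkLip φ Kφ hφlip⟩, fun x => ⟨hφint x, hmain x⟩, ?_⟩
  -- uniqueness
  rintro ψ ⟨Kψ, hψlip⟩ hψeq
  have hψlipR : ∀ p q : X, ‖ψ p - ψ q‖ ≤ (Kψ:ℝ) * dist p q := fun p q => by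
    rw [← dist_eq_norm]; exact hψlip.dist_le_mul p q
  set C : ℝ := (Kψ:ℝ) + Kφ with hCdef
  have hC0 : 0 ≤ C := add_nonneg Kψ.coe_nonneg hKφ0
  have hhint : ∀ x, Integrable (fun ω => g ω • (ψ (f x ω) - φ (f x ω))) μ := by
    intro x
    refine (((hψeq x).1).sub (hφint x)).congr (Filter.Eventually.of_forall fun ω => ?_)
    show g ω • ψ (f x ω) - g ω • φ (f x ω) = g ω • (ψ (f x ω) - φ (f x ω))
    rw [smul_sub]
  have hheq : ∀ x, ψ x - φ x = ∫ ω, g ω • (ψ (f x ω) - φ (f x ω)) ∂μ := by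
    intro x
    rw [(hψeq x).2, hmain x,
      show (∫ ω, g ω • ψ (f x ω) ∂μ + F x) - (∫ ω, g ω • φ (f x ω) ∂μ + F x)
        = ∫ ω, g ω • ψ (f x ω) ∂μ - ∫ ω, g ω • φ (f x ω) ∂μ from by abel,
      ← integral_sub (hψeq x).1 (hφint x)]
    congr 1
    funext ω
    rw [smul_sub]
  have hhlip : ∀ p q : X, ‖(ψ p - φ p) - (ψ q - φ q)‖ ≤ C * dist p q := by
    intro p q
    have habel : (ψ p - φ p) - (ψ q - φ q) = (ψ p - ψ q) - (φ p - φ q) := by abel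
    rw [habel]
    calc ‖(ψ p - ψ q) - (φ p - φ q)‖ ≤ ‖ψ p - ψ q‖ + ‖φ p - φ q‖ := norm_sub_le _ _
      _ ≤ (Kψ:ℝ) * dist p q + Kφ * dist p q := add_le_add (hψlipR p q) (hφlip p q)
      _ = C * dist p q := by rw [hCdef]; ring
  have hiter : ∀ n (p q : X), ‖(ψ p - φ p) - (ψ q - φ q)‖ ≤ C * lam ^ n * dist p q := by
    intro n
    induction n with
    | zero => intro p q; simpa using hhlip p q
    | succ n ih =>
      intro p q
      rw [hheq p, hheq q, ← integral_sub (hhint p) (hhint q)]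
      calc ‖∫ ω, (g ω • (ψ (f p ω) - φ (f p ω)) - g ω • (ψ (f q ω) - φ (f q ω))) ∂μ‖
          ≤ ∫ ω, ‖g ω • (ψ (f p ω) - φ (f p ω)) - g ω • (ψ (f q ω) - φ (f q ω))‖ ∂μ :=
            norm_integral_le_integral_norm _
        _ ≤ ∫ ω, C * lam ^ n * (‖g ω‖ * dist (f p ω) (f q ω)) ∂μ := by
            refine integral_mono ((hhint p).sub (hhint q)).norm
              ((hdint p q).const_mul _) fun ω => ?_
            rw [← smul_sub, norm_smul]
            calc ‖g ω‖ * ‖(ψ (f p ω) - φ (f p ω)) - (ψ (f q ω) - φ (f q ω))‖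
                ≤ ‖g ω‖ * (C * lam ^ n * dist (f p ω) (f q ω)) :=
                  mul_le_mul_of_nonneg_left (ih _ _) (norm_nonneg _)
              _ = C * lam ^ n * (‖g ω‖ * dist (f p ω) (f q ω)) := by ring
        _ = C * lam ^ n * ∫ ω, ‖g ω‖ * dist (f p ω) (f q ω) ∂μ := integral_const_mul _ _
        _ ≤ C * lam ^ n * (lam * dist p q) :=
            mul_le_mul_of_nonneg_left (hcontr p q)
              (mul_nonneg hC0 (pow_nonneg hlam0 n))
        _ = C * lam ^ (n+1) * dist p q := by ring
  have hconst : ∀ p q : X, ψ p - φ p = ψ q - φ q := by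
    intro p q
    have htend : Filter.Tendsto (fun n : ℕ => C * lam ^ n * dist p q)
        Filter.atTop (nhds 0) := by
      have h1 := ((tendsto_pow_atTop_nhds_zero_of_lt_one hlam0 hlam1).const_mul C).mul_const
        (dist p q)
      simpa using h1
    have h0 : ‖(ψ p - φ p) - (ψ q - φ q)‖ ≤ 0 :=
      ge_of_tendsto htend (Filter.Eventually.of_forall fun n => hiter n p q)
    have := le_antisymm h0 (norm_nonneg _)
    rwa [norm_eq_zero, sub_eq_zero] at this
  funext x
  have hc : ψ x - φ x = γ • (ψ x - φ x) := by
    calc ψ x - φ x = ∫ ω, g ω • (ψ (f x ω) - φ (f x ω)) ∂μ := hheq x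
      _ = ∫ ω, g ω • (ψ x - φ x) ∂μ := by
          congr 1; funext ω; rw [hconst (f x ω) x]
      _ = (∫ ω, g ω ∂μ) • (ψ x - φ x) := integral_smul_const _ _
      _ = γ • (ψ x - φ x) := by rw [← hγ]
  have hz : (1 - γ) • (ψ x - φ x) = 0 := by
    rw [sub_smul, one_smul, ← hc, sub_self]
  have := (smul_eq_zero.mp hz).resolve_left h1γ
  exact sub_eq_zero.mp this
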